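/- Let Q be an n×n real matrix with nonnegative entries that is substochastic (every row sum is at most 1) and primitive (there exists k ≥ 1 such that every entry of Q^k is strictly positive). Then there exists a unique probability vector d ∈ ℝ^n such that d Q = ρ d for some real ρ > 0; moreover ρ is the dominant (Perron) eigenvalue of Q. In other words, the Markov chain with absorbing state 0 and transient transition block Q has a unique quasi-stationary distribution. -/

import Mathlib

open Finset Matrix

lemma qsd_vecMul_apply {n : ℕ} (A : Matrix (Fin n) (Fin n) ℝ) (x : Fin n → ℝ) (j : Fin n) :
    Matrix.vecMul x A j = ∑ i, x i * A i j := by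
  simp [Matrix.vecMul, dotProduct]

lemma qsd_sum_mul_pos {n : ℕ} {A : Matrix (Fin n) (Fin n) ℝ} (hA : ∀ i j, 0 < A i j)
    {x : Fin n → ℝ} (hx0 : ∀ i, 0 ≤ x i) {i₀ : Fin n} (hi₀ : 0 < x i₀) (j : Fin n) :
    0 < ∑ i, x i * A i j :=
  Finset.sum_pos' (fun i _ => mul_nonneg (hx0 i) (hA i j).le)
    ⟨i₀, Finset.mem_univ _, mul_pos hi₀ (hA i₀ j)⟩

lemma qsd_exists_pos {n : ℕ} {x : Fin n → ℝ} (hx0 : ∀ i, 0 ≤ x i) (hx : x ≠ 0) :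
    ∃ i, 0 < x i := by
  by_contra h
  push_neg at h
  exact hx (funext fun i => le_antisymm (h i) (hx0 i))

/-- Perron–Frobenius existence for a strictly positive matrix: there is a strictly
positive probability (left) eigenvector with a positive eigenvalue. -/
lemma qsd_perron_pos {n : ℕ} (hn : 0 < n) (A : Matrix (Fin n) (Fin n) ℝ)
    (hA : ∀ i j, 0 < A i j) :
    ∃ d : Fin n → ℝ, ∃ ρ : ℝ, (∀ i, 0 < d i) ∧ (∑ i, d i = 1) ∧ 0 < ρ ∧
      Matrix.vecMul d A = ρ • d := by
  haveI : Nonempty (Fin n) := ⟨⟨0, hn⟩⟩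
  have hUne : (Finset.univ : Finset (Fin n)).Nonempty := Finset.univ_nonempty
  set M : ℝ := ∑ i, ∑ j, A i j with hM
  -- the constraint set
  set C : Set ((Fin n → ℝ) × ℝ) :=
    (stdSimplex ℝ (Fin n) ×ˢ Set.Icc (0:ℝ) M) ∩
      {p | ∀ j, p.2 * p.1 j ≤ ∑ i, p.1 i * A i j} with hC
  have hCclosed : IsClosed {p : (Fin n → ℝ) × ℝ | ∀ j, p.2 * p.1 j ≤ ∑ i, p.1 i * A i j} := by
    have : {p : (Fin n → ℝ) × ℝ | ∀ j, p.2 * p.1 j ≤ ∑ i, p.1 i * A i j}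
        = ⋂ j, {p : (Fin n → ℝ) × ℝ | p.2 * p.1 j ≤ ∑ i, p.1 i * A i j} := by
      ext p; simp [Set.mem_iInter]
    rw [this]
    refine isClosed_iInter fun j => isClosed_le ?_ ?_
    · exact continuous_snd.mul ((continuous_apply j).comp continuous_fst)
    · exact continuous_finset_sum _ fun i _ =>
        ((continuous_apply i).comp continuous_fst).mul continuous_const
  have hCcompact : IsCompact C :=
    ((isCompact_stdSimplex (𝕜 := ℝ) (ι := Fin n)).prod isCompact_Icc).inter_right hCclosed
  -- nonempty
  set r₀ : ℝ := Finset.univ.inf' hUne (fun j => ∑ i, A i j) with hr₀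
  have hr₀pos : 0 < r₀ := by
    rw [hr₀, Finset.lt_inf'_iff]
    exact fun j _ => Finset.sum_pos (fun i _ => hA i j) hUne
  have hr₀le : ∀ j : Fin n, r₀ ≤ ∑ i, A i j := fun j => Finset.inf'_le _ (Finset.mem_univ j)
  have hr₀M : r₀ ≤ M := by
    refine (hr₀le (Classical.arbitrary _)).trans ?_
    rw [hM, Finset.sum_comm (f := fun i j => A i j)]
    exact Finset.single_le_sum (f := fun j => ∑ i, A i j)
      (fun j _ => Finset.sum_nonneg fun i _ => (hA i j).le) (Finset.mem_univ _)
  have hp₀ : (((fun _ => (n : ℝ)⁻¹) : Fin n → ℝ), r₀) ∈ C := by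
    refine ⟨⟨⟨fun i => by positivity, ?_⟩, ⟨hr₀pos.le, hr₀M⟩⟩, ?_⟩
    · simp only [Finset.sum_const, Finset.card_univ, Fintype.card_fin, nsmul_eq_mul]
      field_simp
    · intro j
      have h1 : ∑ i, (n:ℝ)⁻¹ * A i j = (n:ℝ)⁻¹ * ∑ i, A i j := by rw [Finset.mul_sum]
      have hn' : (0:ℝ) < (n:ℝ)⁻¹ := by positivity
      show r₀ * (n:ℝ)⁻¹ ≤ ∑ i, (n:ℝ)⁻¹ * A i j
      calc r₀ * (n:ℝ)⁻¹ ≤ (∑ i, A i j) * (n:ℝ)⁻¹ :=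
            mul_le_mul_of_nonneg_right (hr₀le j) hn'.le
        _ = ∑ i, (n:ℝ)⁻¹ * A i j := by rw [h1, mul_comm]
  have hCne : C.Nonempty := ⟨_, hp₀⟩
  -- maximize second coordinate
  obtain ⟨p, hpC, hpmax⟩ := hCcompact.exists_isMaxOn hCne continuous_snd.continuousOn
  obtain ⟨⟨hps, hpI⟩, hcond⟩ := hpC
  set d : Fin n → ℝ := p.1 with hd
  set ρ : ℝ := p.2 with hρ
  have hd0 : ∀ i, 0 ≤ d i := hps.1
  have hdsum : ∑ i, d i = 1 := hps.2
  have hρr₀ : r₀ ≤ ρ := hpmax hp₀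
  have hρpos : 0 < ρ := lt_of_lt_of_le hr₀pos hρr₀
  -- e = d A
  set e : Fin n → ℝ := fun j => ∑ i, d i * A i j with he
  obtain ⟨i₀, hi₀⟩ : ∃ i, 0 < d i := by
    refine qsd_exists_pos hd0 fun h => ?_
    rw [h] at hdsum; simp at hdsum
  have hepos : ∀ j, 0 < e j := fun j => qsd_sum_mul_pos hA hd0 hi₀ j
  have hle : ∀ j, ρ * d j ≤ e j := hcond
  -- key claim: equality
  have hkey : ∀ j, e j = ρ * d j := by
    by_contra h
    push_neg at h
    obtain ⟨j₀, hj₀⟩ := h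
    have hj₀' : ρ * d j₀ < e j₀ := lt_of_le_of_ne (hle j₀) (Ne.symm hj₀)
    set s : ℝ := ∑ j, e j with hs
    have hspos : 0 < s := Finset.sum_pos (fun j _ => hepos j) hUne
    set ρ₁ : ℝ := Finset.univ.inf' hUne (fun j => (∑ i, e i * A i j) / e j) with hρ₁
    have hρlt : ρ < ρ₁ := by
      rw [hρ₁, Finset.lt_inf'_iff]
      intro j _
      rw [lt_div_iff₀ (hepos j)]
      have hsub : 0 < ∑ i, (e i - ρ * d i) * A i j :=
        Finset.sum_pos' (fun i _ => mul_nonneg (sub_nonneg.2 (hle i)) (hA i j).le)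
          ⟨j₀, Finset.mem_univ _, mul_pos (sub_pos.2 hj₀') (hA j₀ j)⟩
      have hexp : ∑ i, (e i - ρ * d i) * A i j
          = (∑ i, e i * A i j) - ρ * e j := by
        have h2 : ∀ i ∈ Finset.univ, (e i - ρ * d i) * A i j
            = e i * A i j - ρ * (d i * A i j) := fun i _ => by ring
        rw [Finset.sum_congr rfl h2, Finset.sum_sub_distrib, ← Finset.mul_sum]
      rw [hexp] at hsub
      linarith
    have hρ₁le : ∀ j, ρ₁ * e j ≤ ∑ i, e i * A i j := by
      intro j
      have := Finset.inf'_le (fun j => (∑ i, e i * A i j) / e j) (Finset.mem_univ j)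
      rw [← hρ₁] at this
      calc ρ₁ * e j ≤ ((∑ i, e i * A i j) / e j) * e j :=
            mul_le_mul_of_nonneg_right this (hepos j).le
        _ = ∑ i, e i * A i j := div_mul_cancel₀ _ (hepos j).ne'
    have hρ₁M : ρ₁ ≤ M := by
      have hsum : ρ₁ * s ≤ ∑ j, ∑ i, e i * A i j := by
        rw [hs, Finset.mul_sum]
        exact Finset.sum_le_sum fun j _ => hρ₁le j
      have hbnd : ∑ j, ∑ i, e i * A i j ≤ s * M := by
        rw [Finset.sum_comm, hM, Finset.mul_sum]
        refine Finset.sum_le_sum fun i _ => ?_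
        rw [Finset.mul_sum]
        refine Finset.sum_le_sum fun j _ => ?_
        exact mul_le_mul_of_nonneg_right
          (Finset.single_le_sum (fun j _ => (hepos j).le) (Finset.mem_univ i)) (hA i j).le
      have h3 : ρ₁ * s ≤ M * s := by rw [mul_comm M s]; exact hsum.trans hbnd
      exact le_of_mul_le_mul_right h3 hspos
    -- (d₁, ρ₁) ∈ C contradicts maximality
    have hmem : ((s⁻¹ • e : Fin n → ℝ), ρ₁) ∈ C := by
      refine ⟨⟨⟨fun i => by
          simp only [Pi.smul_apply, smul_eq_mul]
          exact mul_nonneg (inv_nonneg.2 hspos.le) (hepos i).le, ?_⟩,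
          ⟨(hρpos.trans hρlt).le, hρ₁M⟩⟩, ?_⟩
      · simp only [Pi.smul_apply, smul_eq_mul, ← Finset.mul_sum]
        exact inv_mul_cancel₀ hspos.ne'
      · intro j
        simp only [Pi.smul_apply, smul_eq_mul]
        have h1 : ∑ i, s⁻¹ * e i * A i j = s⁻¹ * ∑ i, e i * A i j := by
          rw [Finset.mul_sum]
          exact Finset.sum_congr rfl fun i _ => by ring
        rw [h1]
        have := mul_le_mul_of_nonneg_left (hρ₁le j) (inv_nonneg.2 hspos.le)
        calc ρ₁ * (s⁻¹ * e j) = s⁻¹ * (ρ₁ * e j) := by ring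
          _ ≤ s⁻¹ * ∑ i, e i * A i j := this
    exact absurd (hpmax hmem) (not_le.2 hρlt)
  -- conclude
  have hdpos : ∀ i, 0 < d i := by
    intro i
    have h1 : 0 < ρ * d i := (hkey i) ▸ hepos i
    nlinarith [hd0 i]
  refine ⟨d, ρ, hdpos, hdsum, hρpos, funext fun j => ?_⟩
  rw [qsd_vecMul_apply]
  show e j = (ρ • d) j
  rw [hkey j, Pi.smul_apply, smul_eq_mul]

/-- Uniqueness (up to scaling) of nonnegative eigenvectors of a strictly positive
matrix at a given positive eigenvalue. -/
lemma qsd_perron_unique {n : ℕ} {A : Matrix (Fin n) (Fin n) ℝ} (hA : ∀ i j, 0 < A i j)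
    {d : Fin n → ℝ} (hdpos : ∀ i, 0 < d i) {ρ : ℝ} (hρ : 0 < ρ)
    (hdA : Matrix.vecMul d A = ρ • d)
    {e : Fin n → ℝ} (he0 : ∀ i, 0 ≤ e i) (hene : e ≠ 0)
    (heA : Matrix.vecMul e A = ρ • e) :
    ∃ t : ℝ, 0 < t ∧ e = t • d := by
  obtain ⟨iw, hiw⟩ : ∃ i, 0 < e i := qsd_exists_pos he0 hene
  haveI : Nonempty (Fin n) := ⟨iw⟩
  have hUne : (Finset.univ : Finset (Fin n)).Nonempty := Finset.univ_nonempty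
  have hvA : ∀ (x : Fin n → ℝ) (c : ℝ), Matrix.vecMul x A = c • x →
      ∀ j, c * x j = ∑ i, x i * A i j := by
    intro x c hx j
    rw [← qsd_vecMul_apply, hx, Pi.smul_apply, smul_eq_mul]
  have hepos : ∀ j, 0 < e j := by
    intro j
    have h1 : 0 < ∑ i, e i * A i j := qsd_sum_mul_pos hA he0 hiw j
    have h2 := hvA e ρ heA j
    nlinarith
  set t : ℝ := Finset.univ.inf' hUne (fun i => e i / d i) with ht
  have htpos : 0 < t := by
    rw [ht, Finset.lt_inf'_iff]
    exact fun i _ => div_pos (hepos i) (hdpos i)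
  have hti : ∀ i, t * d i ≤ e i := by
    intro i
    have h1 : t ≤ e i / d i := Finset.inf'_le _ (Finset.mem_univ i)
    calc t * d i ≤ (e i / d i) * d i := mul_le_mul_of_nonneg_right h1 (hdpos i).le
      _ = e i := div_mul_cancel₀ _ (hdpos i).ne'
  obtain ⟨i₀, _, hi₀⟩ := Finset.exists_mem_eq_inf' hUne (fun i => e i / d i)
  have hfi₀ : e i₀ - t * d i₀ = 0 := by
    rw [ht, hi₀, div_mul_cancel₀ _ (hdpos i₀).ne', sub_self]
  set f : Fin n → ℝ := e - t • d with hf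
  have hfA : Matrix.vecMul f A = ρ • f := by
    rw [hf, Matrix.sub_vecMul, Matrix.smul_vecMul, hdA, heA]
    funext i
    simp only [Pi.sub_apply, Pi.smul_apply, smul_eq_mul]
    ring
  have hf0 : ∀ i, 0 ≤ f i := fun i => sub_nonneg.2 (hti i)
  have hfzero : f = 0 := by
    by_contra hne
    obtain ⟨jw, hjw⟩ : ∃ i, 0 < f i := qsd_exists_pos hf0 hne
    have h1 : 0 < ∑ i, f i * A i i₀ := qsd_sum_mul_pos hA hf0 hjw i₀
    have h2 := hvA f ρ hfA i₀
    have h3 : f i₀ = 0 := hfi₀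
    rw [h3, mul_zero] at h2
    linarith [h2 ▸ h1]
  refine ⟨t, htpos, ?_⟩
  rw [hf] at hfzero
  exact sub_eq_zero.1 hfzero

lemma qsd_vecMul_pow {n : ℕ} (Q : Matrix (Fin n) (Fin n) ℝ) (d : Fin n → ℝ) (ρ : ℝ)
    (h : Matrix.vecMul d Q = ρ • d) (m : ℕ) : Matrix.vecMul d (Q ^ m) = ρ ^ m • d := by
  induction m with
  | zero => simp
  | succ m ih =>
    rw [pow_succ, ← Matrix.vecMul_vecMul, ih, Matrix.smul_vecMul, h, smul_smul, pow_succ]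

/-- A substochastic, primitive nonnegative matrix `Q` (the transient block of an
absorbing Markov chain) has a unique quasi-stationary distribution: a unique probability
vector `d` with `d Q = ρ d` for some `ρ > 0`; moreover `ρ` is the dominant (Perron)
eigenvalue of `Q`. -/
theorem quasi_stationary_exists_unique (n : ℕ) (hn : 0 < n)
    (Q : Matrix (Fin n) (Fin n) ℝ)
    (hQ0 : ∀ i j, 0 ≤ Q i j) (hsub : ∀ i, ∑ j, Q i j ≤ 1)
    (hprim : ∃ k : ℕ, 1 ≤ k ∧ ∀ i j, 0 < (Q ^ k) i j) :
    ∃ d : Fin n → ℝ, ∃ ρ : ℝ,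
      (∀ i, 0 ≤ d i) ∧ (∑ i, d i = 1) ∧ 0 < ρ ∧ Matrix.vecMul d Q = ρ • d ∧
      (∀ μ : ℂ,
        Module.End.HasEigenvalue (Matrix.toLin' (Q.map (fun x => (x : ℂ)))) μ →
          ‖μ‖ ≤ ρ) ∧
      (∀ d' : Fin n → ℝ, ∀ ρ' : ℝ, (∀ i, 0 ≤ d' i) → (∑ i, d' i = 1) → 0 < ρ' →
        Matrix.vecMul d' Q = ρ' • d' → d' = d) := by
  obtain ⟨k, hk1, hAk⟩ := hprim
  obtain ⟨m, rfl⟩ : ∃ m, k = m + 1 := ⟨k - 1, (Nat.succ_pred_eq_of_pos hk1).symm⟩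
  set A : Matrix (Fin n) (Fin n) ℝ := Q ^ (m + 1) with hA
  obtain ⟨d, lam, hdpos, hdsum, hlampos, hdA⟩ := qsd_perron_pos hn A hAk
  have hd0 : ∀ i, 0 ≤ d i := fun i => (hdpos i).le
  have hdne : d ≠ 0 := by
    intro h
    have := hdpos ⟨0, hn⟩
    rw [h] at this
    simp at this
  -- e := d Q is a nonnegative eigenvector of A with eigenvalue lam
  set e : Fin n → ℝ := Matrix.vecMul d Q with he
  have he0 : ∀ j, 0 ≤ e j := fun j => by
    rw [he, qsd_vecMul_apply]
    exact Finset.sum_nonneg fun i _ => mul_nonneg (hd0 i) (hQ0 i j)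
  have hene : e ≠ 0 := by
    intro h
    have h2 : Matrix.vecMul d (Q ^ (m + 1)) = 0 := by
      rw [pow_succ', ← Matrix.vecMul_vecMul, ← he, h, Matrix.zero_vecMul]
    rw [← hA, hdA] at h2
    have h3 := congrFun h2 ⟨0, hn⟩
    simp only [Pi.smul_apply, smul_eq_mul, Pi.zero_apply] at h3
    nlinarith [hdpos ⟨0, hn⟩, hlampos]
  have hcomm : Q * A = A * Q := by rw [hA, ← pow_succ', ← pow_succ]
  have heA : Matrix.vecMul e A = lam • e := by
    calc Matrix.vecMul e A = Matrix.vecMul d (Q * A) := Matrix.vecMul_vecMul d Q A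
      _ = Matrix.vecMul d (A * Q) := by rw [hcomm]
      _ = Matrix.vecMul (Matrix.vecMul d A) Q := (Matrix.vecMul_vecMul d A Q).symm
      _ = Matrix.vecMul (lam • d) Q := by rw [hdA]
      _ = lam • e := by rw [Matrix.smul_vecMul, he]
  obtain ⟨ρ, hρpos, heρ⟩ := qsd_perron_unique hAk hdpos hlampos hdA he0 hene heA
  have hdQ : Matrix.vecMul d Q = ρ • d := he ▸ heρ
  -- right Perron vector of A (Perron vector of Aᵀ)
  have hAT : ∀ i j, 0 < Aᵀ i j := fun i j => hAk j i
  obtain ⟨w, lam₂, hwpos, hwsum, hlam₂pos, hwA⟩ := qsd_perron_pos hn Aᵀ hAT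
  have hAw : A.mulVec w = lam₂ • w := by rw [← Matrix.vecMul_transpose]; exact hwA
  have hpair : ∀ (x : Fin n → ℝ) (c : ℝ), (∀ i, 0 ≤ x i) → x ≠ 0 →
      Matrix.vecMul x A = c • x → c = lam₂ := by
    intro x c hx0 hxne hx
    obtain ⟨i₂, hi₂⟩ := qsd_exists_pos hx0 hxne
    have h1 : x ⬝ᵥ A.mulVec w = Matrix.vecMul x A ⬝ᵥ w := Matrix.dotProduct_mulVec x A w
    rw [hAw, hx, dotProduct_smul, smul_dotProduct] at h1
    simp only [smul_eq_mul] at h1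
    have hxw : 0 < x ⬝ᵥ w := by
      rw [dotProduct]
      exact Finset.sum_pos' (fun i _ => mul_nonneg (hx0 i) (hwpos i).le)
        ⟨i₂, Finset.mem_univ _, mul_pos hi₂ (hwpos i₂)⟩
    exact (mul_right_cancel₀ hxw.ne' h1).symm
  have hlam2 : lam = lam₂ := hpair d lam hd0 hdne hdA
  refine ⟨d, ρ, hd0, hdsum, hρpos, hdQ, ?_, ?_⟩
  · -- dominance
    intro μ hμ
    obtain ⟨v, hv⟩ := hμ.exists_hasEigenvector
    have hv1 : (Q.map (fun x => (x : ℂ))).mulVec v = μ • v := by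
      rw [← Matrix.toLin'_apply]; exact hv.apply_eq_smul
    obtain ⟨i₁, hi₁⟩ : ∃ i, v i ≠ 0 := Function.ne_iff.1 hv.2
    have habs : ∀ j, ‖μ‖ * ‖v j‖ ≤ ∑ i, Q j i * ‖v i‖ := by
      intro j
      have h1 : μ * v j = ∑ i, (Q j i : ℂ) * v i := by
        have h2 := congrFun hv1 j
        rw [Matrix.mulVec, dotProduct] at h2
        simp only [Matrix.map_apply] at h2
        rw [Pi.smul_apply, smul_eq_mul] at h2
        rw [← h2]
      calc ‖μ‖ * ‖v j‖ = ‖μ * v j‖ := (norm_mul _ _).symm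
        _ = ‖∑ i, (Q j i : ℂ) * v i‖ := by rw [h1]
        _ ≤ ∑ i, ‖(Q j i : ℂ) * v i‖ := norm_sum_le _ _
        _ = ∑ i, Q j i * ‖v i‖ := by
            refine Finset.sum_congr rfl fun i _ => ?_
            rw [norm_mul, Complex.norm_real, Real.norm_of_nonneg (hQ0 j i)]
    set S : ℝ := ∑ j, d j * ‖v j‖ with hS
    have hSpos : 0 < S :=
      Finset.sum_pos' (fun i _ => mul_nonneg (hdpos i).le (norm_nonneg _))
        ⟨i₁, Finset.mem_univ _, mul_pos (hdpos i₁) (norm_pos_iff.mpr hi₁)⟩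
    have hmain : ‖μ‖ * S ≤ ρ * S := by
      calc ‖μ‖ * S = ∑ j, d j * (‖μ‖ * ‖v j‖) := by
            rw [hS, Finset.mul_sum]
            exact Finset.sum_congr rfl fun j _ => by ring
        _ ≤ ∑ j, d j * ∑ i, Q j i * ‖v i‖ :=
            Finset.sum_le_sum fun j _ =>
              mul_le_mul_of_nonneg_left (habs j) (hdpos j).le
        _ = ∑ i, (∑ j, d j * Q j i) * ‖v i‖ := by
            simp_rw [Finset.mul_sum, Finset.sum_mul]
            rw [Finset.sum_comm]
            exact Finset.sum_congr rfl fun j _ => Finset.sum_congr rfl fun i _ => by ring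
        _ = ∑ i, (ρ * d i) * ‖v i‖ := by
            refine Finset.sum_congr rfl fun i _ => ?_
            have h4 := congrFun hdQ i
            rw [qsd_vecMul_apply] at h4
            rw [h4, Pi.smul_apply, smul_eq_mul]
        _ = ρ * S := by
            rw [hS, Finset.mul_sum]
            exact Finset.sum_congr rfl fun i _ => by ring
    exact le_of_mul_le_mul_right hmain hSpos
  · -- uniqueness
    intro d' ρ' hd'0 hd'sum hρ'pos hd'Q
    have hd'ne : d' ≠ 0 := by
      intro h
      rw [h] at hd'sum
      simp at hd'sum
    have hd'A : Matrix.vecMul d' A = ρ' ^ (m + 1) • d' := by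
      rw [hA]
      exact qsd_vecMul_pow Q d' ρ' hd'Q (m + 1)
    have h2 : ρ' ^ (m + 1) = lam₂ := hpair d' _ hd'0 hd'ne hd'A
    rw [h2, ← hlam2] at hd'A
    obtain ⟨t, htpos, ht⟩ := qsd_perron_unique hAk hdpos hlampos hdA hd'0 hd'ne hd'A
    have hsum' : ∑ i, d' i = t * ∑ i, d i := by
      rw [ht, Finset.mul_sum]
      exact Finset.sum_congr rfl fun i _ => by simp
    rw [hd'sum, hdsum, mul_one] at hsum'
    rw [ht, ← hsum', one_smul]
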